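/- The Lax vector field preserves lower-triangularity: for any F ∈ M_N(ℝ) and any lower-triangular matrix A ∈ M_N(ℝ), the matrix B(A) is lower triangular and the commutator [A, B(A)] is lower triangular. Consequently, the set of lower-triangular matrices is invariant under the flow of Ȧ = [A, B(A)]. -/

import Mathlib

open Matrix BigOperators Finset

/-- The commutator of two real `N × N` matrices. -/
def matComm {N : ℕ} (A B : Matrix (Fin N) (Fin N) ℝ) : Matrix (Fin N) (Fin N) ℝ :=
  A * B - B * A

/-- The Markov prescription: `B(A)_{ij} = F_{ij} A_{ij}` off the diagonal and
`B(A)_{ii} = -∑_{j ≠ i} B(A)_{ij}`. -/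
def BofA {N : ℕ} (F A : Matrix (Fin N) (Fin N) ℝ) : Matrix (Fin N) (Fin N) ℝ :=
  Matrix.of fun i j =>
    if i = j then -∑ k ∈ Finset.univ.filter (fun k => k ≠ i), F i k * A i k
    else F i j * A i j

/-- `L` is lower triangular: `L_{ij} = 0` whenever `i < j`. -/
def lowerTri {N : ℕ} (L : Matrix (Fin N) (Fin N) ℝ) : Prop :=
  ∀ i j : Fin N, i < j → L i j = 0

attribute [local instance] Matrix.normedAddCommGroup Matrix.normedSpace

namespace LaxAux

variable {N : ℕ}

/-- strictly upper part -/
def up (M : Matrix (Fin N) (Fin N) ℝ) : Matrix (Fin N) (Fin N) ℝ :=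
  Matrix.of fun i j => if i < j then M i j else 0

/-- lower part (including diagonal) -/
def low (M : Matrix (Fin N) (Fin N) ℝ) : Matrix (Fin N) (Fin N) ℝ :=
  Matrix.of fun i j => if i < j then 0 else M i j

lemma lowerTri_low (M : Matrix (Fin N) (Fin N) ℝ) : lowerTri (low M) :=
  fun _ _ h => if_pos h

lemma low_add_up (M : Matrix (Fin N) (Fin N) ℝ) : low M + up M = M := by
  ext i j
  by_cases h : i < j <;> simp [low, up, h]

lemma up_eq_zero_of_lowerTri {M : Matrix (Fin N) (Fin N) ℝ} (h : lowerTri M) :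
    up M = 0 := by
  ext i j
  by_cases hij : i < j
  · simp [up, hij, h i j hij]
  · simp [up, hij]

lemma lowerTri_of_up_eq_zero {M : Matrix (Fin N) (Fin N) ℝ} (h : up M = 0) :
    lowerTri M := by
  intro i j hij
  have := congrFun (congrFun h i) j
  simpa [up, hij] using this

lemma up_sub (M M' : Matrix (Fin N) (Fin N) ℝ) : up (M - M') = up M - up M' := by
  ext i j
  by_cases h : i < j <;> simp [up, h]

/-- Part 1: `B(A)` is lower triangular for lower triangular `A`. -/
lemma BofA_lowerTri (F : Matrix (Fin N) (Fin N) ℝ) {A : Matrix (Fin N) (Fin N) ℝ}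
    (hA : lowerTri A) : lowerTri (BofA F A) := by
  intro i j hij
  have hne : ¬ i = j := ne_of_lt hij
  simp [BofA, hne, hA i j hij]

/-- Part 2: the commutator is lower triangular for lower triangular `A`. -/
lemma comm_lowerTri (F : Matrix (Fin N) (Fin N) ℝ) {A : Matrix (Fin N) (Fin N) ℝ}
    (hA : lowerTri A) : lowerTri (matComm A (BofA F A)) := by
  intro i j hij
  have hB := BofA_lowerTri F hA
  have h1 : ∀ k, A i k * BofA F A k j = 0 := by
    intro k
    rcases lt_or_ge i k with h | h
    · rw [hA i k h, zero_mul]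
    · rw [hB k j (lt_of_le_of_lt h hij), mul_zero]
  have h2 : ∀ k, BofA F A i k * A k j = 0 := by
    intro k
    rcases lt_or_ge i k with h | h
    · rw [hB i k h, zero_mul]
    · rw [hA k j (lt_of_le_of_lt h hij), mul_zero]
  simp only [matComm, Matrix.sub_apply, Matrix.mul_apply]
  rw [Finset.sum_eq_zero (fun k _ => h1 k), Finset.sum_eq_zero (fun k _ => h2 k), sub_zero]

lemma BofA_sub (F M M' : Matrix (Fin N) (Fin N) ℝ) :
    BofA F (M - M') = BofA F M - BofA F M' := by
  ext i j
  by_cases h : i = j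
  · simp only [BofA, Matrix.of_apply, if_pos h, Matrix.sub_apply, mul_sub,
      Finset.sum_sub_distrib]
    ring
  · simp only [BofA, Matrix.of_apply, if_neg h, Matrix.sub_apply, mul_sub]

lemma norm_entry_le (M : Matrix (Fin N) (Fin N) ℝ) (i j : Fin N) : ‖M i j‖ ≤ ‖M‖ :=
  M.norm_entry_le_entrywise_sup_norm

lemma norm_matmul_le (M M' : Matrix (Fin N) (Fin N) ℝ) :
    ‖M * M'‖ ≤ N * ‖M‖ * ‖M'‖ := by
  have h0 : (0 : ℝ) ≤ N * ‖M‖ * ‖M'‖ := by positivity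
  rw [Matrix.norm_le_iff h0]
  intro i j
  rw [Matrix.mul_apply]
  calc ‖∑ k, M i k * M' k j‖ ≤ ∑ k, ‖M i k * M' k j‖ := norm_sum_le _ _
    _ ≤ ∑ _k : Fin N, ‖M‖ * ‖M'‖ := by
        refine Finset.sum_le_sum fun k _ => ?_
        rw [norm_mul]
        exact mul_le_mul (norm_entry_le M i k) (norm_entry_le M' k j)
          (norm_nonneg _) (norm_nonneg _)
    _ = N * ‖M‖ * ‖M'‖ := by
        simp [Finset.sum_const, Finset.card_univ, mul_assoc]

lemma norm_BofA_le (F M : Matrix (Fin N) (Fin N) ℝ) :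
    ‖BofA F M‖ ≤ N * ‖F‖ * ‖M‖ := by
  have h0 : (0 : ℝ) ≤ N * ‖F‖ * ‖M‖ := by positivity
  rw [Matrix.norm_le_iff h0]
  intro i j
  have hN : (1 : ℝ) ≤ N := by exact_mod_cast Nat.one_le_iff_ne_zero.mpr (Fin.pos i).ne'
  by_cases h : i = j
  · simp only [BofA, Matrix.of_apply, if_pos h, norm_neg]
    calc ‖∑ k ∈ Finset.univ.filter (fun k => k ≠ i), F i k * M i k‖
        ≤ ∑ k ∈ Finset.univ.filter (fun k => k ≠ i), ‖F i k * M i k‖ := norm_sum_le _ _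
      _ ≤ ∑ _k ∈ Finset.univ.filter (fun k => k ≠ i), ‖F‖ * ‖M‖ := by
          refine Finset.sum_le_sum fun k _ => ?_
          rw [norm_mul]
          exact mul_le_mul (norm_entry_le F i k) (norm_entry_le M i k)
            (norm_nonneg _) (norm_nonneg _)
      _ = (Finset.univ.filter (fun k => k ≠ i)).card * (‖F‖ * ‖M‖) := by
          rw [Finset.sum_const, nsmul_eq_mul]
      _ ≤ N * ‖F‖ * ‖M‖ := by
          have hcard : ((Finset.univ.filter (fun k => k ≠ i)).card : ℝ) ≤ N := by
            have := Finset.card_filter_le (Finset.univ : Finset (Fin N)) (fun k => k ≠ i)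
            have h2 : (Finset.univ : Finset (Fin N)).card = N := by simp
            exact_mod_cast h2 ▸ this
          have hFM : (0 : ℝ) ≤ ‖F‖ * ‖M‖ := by positivity
          calc ((Finset.univ.filter (fun k => k ≠ i)).card : ℝ) * (‖F‖ * ‖M‖)
              ≤ N * (‖F‖ * ‖M‖) := mul_le_mul_of_nonneg_right hcard hFM
            _ = N * ‖F‖ * ‖M‖ := by ring
  · simp only [BofA, Matrix.of_apply, if_neg h]
    calc ‖F i j * M i j‖ = ‖F i j‖ * ‖M i j‖ := norm_mul _ _
      _ ≤ ‖F‖ * ‖M‖ := mul_le_mul (norm_entry_le F i j) (norm_entry_le M i j)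
          (norm_nonneg _) (norm_nonneg _)
      _ ≤ N * ‖F‖ * ‖M‖ := by nlinarith [norm_nonneg F, norm_nonneg M]

lemma norm_low_le (M : Matrix (Fin N) (Fin N) ℝ) : ‖low M‖ ≤ ‖M‖ := by
  rw [Matrix.norm_le_iff (norm_nonneg M)]
  intro i j
  by_cases h : i < j
  · simp [low, h]
  · simpa [low, h] using norm_entry_le M i j

lemma norm_up_le (M : Matrix (Fin N) (Fin N) ℝ) : ‖up M‖ ≤ ‖M‖ := by
  rw [Matrix.norm_le_iff (norm_nonneg M)]
  intro i j
  by_cases h : i < j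
  · simpa [up, h] using norm_entry_le M i j
  · simp [up, h]

/-- the quadratic vector field -/
def Q (F M : Matrix (Fin N) (Fin N) ℝ) : Matrix (Fin N) (Fin N) ℝ :=
  matComm M (BofA F M)

lemma Q_diff (F Z₁ Z₂ : Matrix (Fin N) (Fin N) ℝ) :
    Q F Z₁ - Q F Z₂ =
      (Z₁ - Z₂) * BofA F Z₁ + Z₂ * BofA F (Z₁ - Z₂)
        - (BofA F (Z₁ - Z₂) * Z₁ + BofA F Z₂ * (Z₁ - Z₂)) := by
  simp only [Q, matComm, BofA_sub]
  noncomm_ring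

lemma Q_lip (F : Matrix (Fin N) (Fin N) ℝ) (R : ℝ)
    {Z₁ Z₂ : Matrix (Fin N) (Fin N) ℝ} (h1 : ‖Z₁‖ ≤ R) (h2 : ‖Z₂‖ ≤ R) :
    ‖Q F Z₁ - Q F Z₂‖ ≤ 4 * ((N : ℝ) * (N * ‖F‖) * R) * ‖Z₁ - Z₂‖ := by
  have hR : (0 : ℝ) ≤ R := le_trans (norm_nonneg _) h1
  set d := Z₁ - Z₂ with hd
  have hb : (0 : ℝ) ≤ (N : ℝ) * ‖F‖ := by positivity
  have hB1 : ‖BofA F Z₁‖ ≤ (N : ℝ) * ‖F‖ * R :=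
    le_trans (norm_BofA_le F Z₁) (by nlinarith)
  have hB2 : ‖BofA F Z₂‖ ≤ (N : ℝ) * ‖F‖ * R :=
    le_trans (norm_BofA_le F Z₂) (by nlinarith)
  have hBd : ‖BofA F d‖ ≤ (N : ℝ) * ‖F‖ * ‖d‖ := norm_BofA_le F d
  have t1 : ‖d * BofA F Z₁‖ ≤ (N : ℝ) * ((N : ℝ) * ‖F‖) * R * ‖d‖ := by
    calc ‖d * BofA F Z₁‖ ≤ (N : ℝ) * ‖d‖ * ‖BofA F Z₁‖ := norm_matmul_le _ _
      _ ≤ (N : ℝ) * ‖d‖ * ((N : ℝ) * ‖F‖ * R) :=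
          mul_le_mul_of_nonneg_left hB1 (by positivity)
      _ = (N : ℝ) * ((N : ℝ) * ‖F‖) * R * ‖d‖ := by ring
  have t2 : ‖Z₂ * BofA F d‖ ≤ (N : ℝ) * ((N : ℝ) * ‖F‖) * R * ‖d‖ := by
    calc ‖Z₂ * BofA F d‖ ≤ (N : ℝ) * ‖Z₂‖ * ‖BofA F d‖ := norm_matmul_le _ _
      _ ≤ (N : ℝ) * ‖Z₂‖ * ((N : ℝ) * ‖F‖ * ‖d‖) :=
          mul_le_mul_of_nonneg_left hBd (by positivity)
      _ = (N : ℝ) * ((N : ℝ) * ‖F‖) * ‖d‖ * ‖Z₂‖ := by ring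
      _ ≤ (N : ℝ) * ((N : ℝ) * ‖F‖) * ‖d‖ * R :=
          mul_le_mul_of_nonneg_left h2 (by positivity)
      _ = (N : ℝ) * ((N : ℝ) * ‖F‖) * R * ‖d‖ := by ring
  have t3 : ‖BofA F d * Z₁‖ ≤ (N : ℝ) * ((N : ℝ) * ‖F‖) * R * ‖d‖ := by
    calc ‖BofA F d * Z₁‖ ≤ (N : ℝ) * ‖BofA F d‖ * ‖Z₁‖ := norm_matmul_le _ _
      _ = (N : ℝ) * ‖Z₁‖ * ‖BofA F d‖ := by ring
      _ ≤ (N : ℝ) * ‖Z₁‖ * ((N : ℝ) * ‖F‖ * ‖d‖) :=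
          mul_le_mul_of_nonneg_left hBd (by positivity)
      _ = (N : ℝ) * ((N : ℝ) * ‖F‖) * ‖d‖ * ‖Z₁‖ := by ring
      _ ≤ (N : ℝ) * ((N : ℝ) * ‖F‖) * ‖d‖ * R :=
          mul_le_mul_of_nonneg_left h1 (by positivity)
      _ = (N : ℝ) * ((N : ℝ) * ‖F‖) * R * ‖d‖ := by ring
  have t4 : ‖BofA F Z₂ * d‖ ≤ (N : ℝ) * ((N : ℝ) * ‖F‖) * R * ‖d‖ := by
    calc ‖BofA F Z₂ * d‖ ≤ (N : ℝ) * ‖BofA F Z₂‖ * ‖d‖ := norm_matmul_le _ _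
      _ = (N : ℝ) * ‖d‖ * ‖BofA F Z₂‖ := by ring
      _ ≤ (N : ℝ) * ‖d‖ * ((N : ℝ) * ‖F‖ * R) :=
          mul_le_mul_of_nonneg_left hB2 (by positivity)
      _ = (N : ℝ) * ((N : ℝ) * ‖F‖) * R * ‖d‖ := by ring
  calc ‖Q F Z₁ - Q F Z₂‖
      = ‖(d * BofA F Z₁ + Z₂ * BofA F d) - (BofA F d * Z₁ + BofA F Z₂ * d)‖ := by
        rw [Q_diff]
    _ ≤ ‖d * BofA F Z₁ + Z₂ * BofA F d‖ + ‖BofA F d * Z₁ + BofA F Z₂ * d‖ :=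
        norm_sub_le _ _
    _ ≤ (‖d * BofA F Z₁‖ + ‖Z₂ * BofA F d‖) + (‖BofA F d * Z₁‖ + ‖BofA F Z₂ * d‖) :=
        add_le_add (norm_add_le _ _) (norm_add_le _ _)
    _ ≤ ((N : ℝ) * ((N : ℝ) * ‖F‖) * R * ‖d‖ + (N : ℝ) * ((N : ℝ) * ‖F‖) * R * ‖d‖)
          + ((N : ℝ) * ((N : ℝ) * ‖F‖) * R * ‖d‖ + (N : ℝ) * ((N : ℝ) * ‖F‖) * R * ‖d‖) :=
        add_le_add (add_le_add t1 t2) (add_le_add t3 t4)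
    _ = 4 * ((N : ℝ) * ((N : ℝ) * ‖F‖) * R) * ‖d‖ := by ring

end LaxAux

open LaxAux in
/-- The Lax vector field preserves lower-triangularity: for lower-triangular `A`,
both `B(A)` and `[A, B(A)]` are lower triangular; consequently the set of
lower-triangular matrices is invariant under the flow of `Ȧ = [A, B(A)]`. -/
theorem lax_preserves_lower_triangular (N : ℕ) (F : Matrix (Fin N) (Fin N) ℝ) :
    (∀ A : Matrix (Fin N) (Fin N) ℝ, lowerTri A → lowerTri (BofA F A)) ∧
    (∀ A : Matrix (Fin N) (Fin N) ℝ, lowerTri A → lowerTri (matComm A (BofA F A))) ∧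
    (∀ (I : Set ℝ), I.OrdConnected →
      ∀ A : ℝ → Matrix (Fin N) (Fin N) ℝ,
        (∀ t ∈ I, ∀ i j, HasDerivAt (fun s => A s i j)
          (matComm (A t) (BofA F (A t)) i j) t) →
        ∀ t₀ ∈ I, lowerTri (A t₀) → ∀ t ∈ I, lowerTri (A t)) := by
  refine ⟨fun A hA => BofA_lowerTri F hA, fun A hA => comm_lowerTri F hA, ?_⟩
  intro I hI A hderiv t₀ ht₀ h₀ t ht
  -- matrix-valued derivative
  have hAderiv : ∀ s ∈ I, HasDerivAt A (Q F (A s)) s := by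
    intro s hs
    have : HasDerivAt (fun t => (show Fin N → Fin N → ℝ from A t)) (Q F (A s)) s := by
      refine hasDerivAt_pi.mpr fun i => hasDerivAt_pi.mpr fun j => ?_
      exact hderiv s hs i j
    exact this
  -- the key reduction, for an arbitrary compact interval inside I
  suffices h : ∀ a b : ℝ, a ≤ b → Set.Icc a b ⊆ I →
      (lowerTri (A a) → ∀ s ∈ Set.Icc a b, lowerTri (A s)) ∧
      (lowerTri (A b) → ∀ s ∈ Set.Icc a b, lowerTri (A s)) by
    rcases le_total t₀ t with hle | hle
    · have hsub : Set.Icc t₀ t ⊆ I := hI.out ht₀ ht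
      exact (h t₀ t hle hsub).1 h₀ t ⟨hle, le_refl t⟩
    · have hsub : Set.Icc t t₀ ⊆ I := hI.out ht ht₀
      exact (h t t₀ hle hsub).2 h₀ t ⟨le_refl t, hle⟩
  intro a b hab hsub
  -- continuity and boundedness of A on [a,b]
  have hAc : ContinuousOn A (Set.Icc a b) := fun s hs =>
    (hAderiv s (hsub hs)).continuousAt.continuousWithinAt
  obtain ⟨C, hC⟩ := isCompact_Icc.exists_bound_of_continuousOn hAc
  set R : ℝ := max C 0 with hRdef
  have hR0 : (0 : ℝ) ≤ R := le_max_right _ _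
  have hCR : ∀ s ∈ Set.Icc a b, ‖A s‖ ≤ R := fun s hs =>
    le_trans (hC s hs) (le_max_left _ _)
  -- clamp to [a,b]
  set σ : ℝ → ℝ := fun s => max a (min b s) with hσdef
  have hσ_mem : ∀ s : ℝ, σ s ∈ Set.Icc a b := by
    intro s
    constructor
    · exact le_max_left _ _
    · exact max_le hab (min_le_left _ _)
  have hσ_eq : ∀ s ∈ Set.Icc a b, σ s = s := by
    intro s hs
    simp only [hσdef]
    rw [min_eq_right hs.2, max_eq_right hs.1]
  -- the time-dependent vector field
  set v : ℝ → Matrix (Fin N) (Fin N) ℝ → Matrix (Fin N) (Fin N) ℝ :=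
    fun s X => up (Q F (low (A (σ s)) + X)) with hvdef
  -- the Lipschitz constant
  set K : NNReal := Real.toNNReal (4 * ((N : ℝ) * ((N : ℝ) * ‖F‖) * (2 * R))) with hKdef
  have hKcoe : (K : ℝ) = 4 * ((N : ℝ) * ((N : ℝ) * ‖F‖) * (2 * R)) :=
    Real.coe_toNNReal _ (by positivity)
  have hv : ∀ s : ℝ, LipschitzOnWith K (v s) (Metric.closedBall 0 R) := by
    intro s
    rw [lipschitzOnWith_iff_dist_le_mul]
    intro X₁ h1 X₂ h2
    rw [Metric.mem_closedBall, dist_zero_right] at h1 h2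
    rw [dist_eq_norm, dist_eq_norm, hKcoe]
    have hlow : ‖low (A (σ s))‖ ≤ R :=
      le_trans (norm_low_le _) (hCR _ (hσ_mem s))
    have e1 : ‖low (A (σ s)) + X₁‖ ≤ 2 * R := by
      calc ‖low (A (σ s)) + X₁‖ ≤ ‖low (A (σ s))‖ + ‖X₁‖ := norm_add_le _ _
        _ ≤ R + R := add_le_add hlow h1
        _ = 2 * R := by ring
    have e2 : ‖low (A (σ s)) + X₂‖ ≤ 2 * R := by
      calc ‖low (A (σ s)) + X₂‖ ≤ ‖low (A (σ s))‖ + ‖X₂‖ := norm_add_le _ _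
        _ ≤ R + R := add_le_add hlow h2
        _ = 2 * R := by ring
    calc ‖v s X₁ - v s X₂‖
        = ‖up (Q F (low (A (σ s)) + X₁) - Q F (low (A (σ s)) + X₂))‖ := by
          rw [up_sub]
      _ ≤ ‖Q F (low (A (σ s)) + X₁) - Q F (low (A (σ s)) + X₂)‖ := norm_up_le _
      _ ≤ 4 * ((N : ℝ) * ((N : ℝ) * ‖F‖) * (2 * R)) *
            ‖(low (A (σ s)) + X₁) - (low (A (σ s)) + X₂)‖ := Q_lip F (2 * R) e1 e2
      _ = 4 * ((N : ℝ) * ((N : ℝ) * ‖F‖) * (2 * R)) * ‖X₁ - X₂‖ := by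
          rw [add_sub_add_left_eq_sub]
  -- the solutions
  set f : ℝ → Matrix (Fin N) (Fin N) ℝ := fun s => up (A s) with hfdef
  set g : ℝ → Matrix (Fin N) (Fin N) ℝ := fun _ => (0 : Matrix (Fin N) (Fin N) ℝ)
    with hgdef
  have hf' : ∀ s ∈ I, HasDerivAt f (up (Q F (A s))) s := by
    intro s hs
    have : HasDerivAt (fun t => (show Fin N → Fin N → ℝ from f t)) (up (Q F (A s))) s := by
      refine hasDerivAt_pi.mpr fun i => hasDerivAt_pi.mpr fun j => ?_
      by_cases hij : i < j
      · simp only [hfdef, up, Matrix.of_apply, if_pos hij]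
        exact hderiv s hs i j
      · simp only [hfdef, up, Matrix.of_apply, if_neg hij]
        exact hasDerivAt_const s 0
    exact this
  have hfv : ∀ s ∈ Set.Icc a b, up (Q F (A s)) = v s (f s) := by
    intro s hs
    simp only [hvdef, hfdef]
    rw [hσ_eq s hs, low_add_up]
  have hfc : ContinuousOn f (Set.Icc a b) := fun s hs =>
    (hf' s (hsub hs)).continuousAt.continuousWithinAt
  have hg0 : ∀ s : ℝ, v s (0 : Matrix (Fin N) (Fin N) ℝ) = 0 := by
    intro s
    simp only [hvdef, add_zero]
    exact up_eq_zero_of_lowerTri (comm_lowerTri F (lowerTri_low (A (σ s))))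
  have hfs : ∀ s ∈ Set.Icc a b, f s ∈ Metric.closedBall (0 : Matrix (Fin N) (Fin N) ℝ) R := by
    intro s hs
    rw [Metric.mem_closedBall, dist_zero_right]
    exact le_trans (norm_up_le _) (hCR s hs)
  have hgs : ∀ s : ℝ, g s ∈ Metric.closedBall (0 : Matrix (Fin N) (Fin N) ℝ) R := by
    intro s
    rw [Metric.mem_closedBall, hgdef, dist_self]
    exact hR0
  constructor
  · intro hA0 s hs
    have heq : Set.EqOn f g (Set.Icc a b) := by
      refine ODE_solution_unique_of_mem_Icc_right (s := fun _ => Metric.closedBall 0 R)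
        (fun τ _ => hv τ) hfc ?_ (fun τ hτ => hfs τ (Set.Ico_subset_Icc_self hτ)) continuousOn_const ?_
        (fun τ _ => hgs τ) ?_
      · intro τ hτ
        have h1 := (hf' τ (hsub (Set.Ico_subset_Icc_self hτ))).hasDerivWithinAt
          (s := Set.Ici τ)
        rwa [hfv τ (Set.Ico_subset_Icc_self hτ)] at h1
      · intro τ _
        have : v τ 0 = 0 := hg0 τ
        rw [hgdef]
        simpa [this] using (hasDerivWithinAt_const τ (Set.Ici τ)
          (0 : Matrix (Fin N) (Fin N) ℝ))
      · simpa [hfdef, hgdef] using up_eq_zero_of_lowerTri hA0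
    exact lowerTri_of_up_eq_zero (heq hs)
  · intro hAb s hs
    have heq : Set.EqOn f g (Set.Icc a b) := by
      refine ODE_solution_unique_of_mem_Icc_left (s := fun _ => Metric.closedBall 0 R)
        (fun τ _ => hv τ) hfc ?_ (fun τ hτ => hfs τ (Set.Ioc_subset_Icc_self hτ)) continuousOn_const ?_
        (fun τ _ => hgs τ) ?_
      · intro τ hτ
        have h1 := (hf' τ (hsub (Set.Ioc_subset_Icc_self hτ))).hasDerivWithinAt
          (s := Set.Iic τ)
        rwa [hfv τ (Set.Ioc_subset_Icc_self hτ)] at h1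
      · intro τ _
        have : v τ 0 = 0 := hg0 τ
        rw [hgdef]
        simpa [this] using (hasDerivWithinAt_const τ (Set.Iic τ)
          (0 : Matrix (Fin N) (Fin N) ℝ))
      · simpa [hfdef, hgdef] using up_eq_zero_of_lowerTri hAb
    exact lowerTri_of_up_eq_zero (heq hs)
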